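/- arXiv:1601.04787 — 3 statements merged into one kernel-verified Lean document; each statement's English description precedes it below -/
import Mathlib

section
/- Let ε ∈ [0,1] and τ ∈ [0, ε³]. Define the bipodal graphon q on [0,1]² by q(x,y) = ε - (ε³ - τ)^{1/3} if x,y are both in [0,1/2] or both in (1/2,1], and q(x,y) = ε + (ε³ - τ)^{1/3} otherwise, assuming ε ≥ (ε³-τ)^{1/3} and ε + (ε³-τ)^{1/3} ≤ 1 so that q takes values in [0,1]. Then q has edge density ∫∫ q = ε and triangle density ∫∫∫ q(x,y)q(y,z)q(z,x) dx dy dz = τ. -/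
open MeasureTheory

lemma step_int (A B : ℝ) :
    ∫ y in (0:ℝ)..1, (if y ≤ 1/2 then A else B) = (A + B) / 2 := by
  have heq : (fun y : ℝ => if y ≤ 1/2 then A else B)
      = fun y => Set.indicator {x : ℝ | x ≤ 1/2} (fun _ => A - B) y + B := by
    funext y
    simp only [Set.indicator_apply, Set.mem_setOf_eq]
    split_ifs <;> ring
  have hi : IntervalIntegrable (Set.indicator {x : ℝ | x ≤ 1/2} (fun _ => A - B))
      volume (0:ℝ) 1 := by
    rw [intervalIntegrable_iff]
    exact (integrableOn_const measure_Ioc_lt_top.ne).indicator measurableSet_Iic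
  rw [heq, intervalIntegral.integral_add hi intervalIntegrable_const,
    intervalIntegral.integral_indicator (by norm_num : (1/2:ℝ) ∈ Set.Icc (0:ℝ) 1)]
  simp
  ring

/-- Edge density of a graphon. -/
noncomputable def edgeDensity (q : ℝ → ℝ → ℝ) : ℝ :=
  ∫ x in (0:ℝ)..1, ∫ y in (0:ℝ)..1, q x y

/-- Triangle density of a graphon. -/
noncomputable def triangleDensity (q : ℝ → ℝ → ℝ) : ℝ :=
  ∫ x in (0:ℝ)..1, ∫ y in (0:ℝ)..1, ∫ z in (0:ℝ)..1, q x y * q y z * q z x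

/-- The bipodal graphon taking value `ε - (ε³-τ)^{1/3}` on the two diagonal blocks and
`ε + (ε³-τ)^{1/3}` on the off-diagonal blocks has edge density `ε` and triangle
density `τ`, for `τ ∈ [0, ε³]` (assuming the values lie in `[0,1]`). -/
theorem bipodal_graphon_realizes_edge_triangle
    (ε τ : ℝ) (hε : ε ∈ Set.Icc (0:ℝ) 1) (hτ0 : 0 ≤ τ) (hτ : τ ≤ ε ^ 3)
    (c : ℝ) (hc : c = (ε ^ 3 - τ) ^ ((1:ℝ)/3))
    (hc1 : c ≤ ε) (hc2 : ε + c ≤ 1)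
    (q : ℝ → ℝ → ℝ)
    (hq : ∀ x y, q x y =
      if (x ≤ 1/2 ∧ y ≤ 1/2) ∨ (1/2 < x ∧ 1/2 < y) then ε - c else ε + c) :
    edgeDensity q = ε ∧ triangleDensity q = τ := by
  have hc3 : c ^ 3 = ε ^ 3 - τ := by
    have h0 : (0:ℝ) ≤ ε ^ 3 - τ := by linarith
    rw [hc, ← Real.rpow_natCast ((ε ^ 3 - τ) ^ ((1:ℝ)/3)) 3, ← Real.rpow_mul h0]
    norm_num
  have hP : ∀ u v : ℝ, u ≤ 1/2 → 1/2 < v →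
      ¬((u ≤ 1/2 ∧ v ≤ 1/2) ∨ (1/2 < u ∧ 1/2 < v)) := by
    intro u v hu hv
    rintro (⟨h1, h2⟩ | ⟨h1, h2⟩) <;> linarith
  have hP' : ∀ u v : ℝ, 1/2 < u → v ≤ 1/2 →
      ¬((u ≤ 1/2 ∧ v ≤ 1/2) ∨ (1/2 < u ∧ 1/2 < v)) := by
    intro u v hu hv
    rintro (⟨h1, h2⟩ | ⟨h1, h2⟩) <;> linarith
  constructor
  · -- edge density
    have hrow : ∀ x : ℝ, (∫ y in (0:ℝ)..1, q x y) = ε := by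
      intro x
      rcases le_or_gt x (1/2) with hx | hx
      · have h1 : (∫ y in (0:ℝ)..1, q x y)
            = ∫ y in (0:ℝ)..1, (if y ≤ 1/2 then ε - c else ε + c) := by
          apply intervalIntegral.integral_congr
          intro y _
          dsimp only
          rw [hq x y]
          by_cases hy : y ≤ (1:ℝ)/2
          · rw [if_pos (Or.inl ⟨hx, hy⟩), if_pos hy]
          · rw [if_neg (hP _ _ hx (not_le.1 hy)), if_neg hy]
        rw [h1, step_int]; ring
      · have h1 : (∫ y in (0:ℝ)..1, q x y)
            = ∫ y in (0:ℝ)..1, (if y ≤ 1/2 then ε + c else ε - c) := by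
          apply intervalIntegral.integral_congr
          intro y _
          dsimp only
          rw [hq x y]
          by_cases hy : y ≤ (1:ℝ)/2
          · rw [if_neg (hP' _ _ hx hy), if_pos hy]
          · rw [if_pos (Or.inr ⟨hx, not_le.1 hy⟩), if_neg hy]
        rw [h1, step_int]; ring
    unfold edgeDensity
    rw [intervalIntegral.integral_congr (fun x _ => hrow x)]
    simp
  · -- triangle density
    set D : ℝ := (ε - c) * (((ε - c)^2 + (ε + c)^2) / 2) with hD
    set F : ℝ := (ε + c) * ((ε - c) * (ε + c)) with hF
    have hz : ∀ x y : ℝ, (∫ z in (0:ℝ)..1, q x y * q y z * q z x)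
        = if (x ≤ 1/2 ∧ y ≤ 1/2) ∨ (1/2 < x ∧ 1/2 < y) then D else F := by
      intro x y
      rcases le_or_gt x (1/2) with hx | hx <;> rcases le_or_gt y (1/2) with hy | hy
      · have h1 : (∫ z in (0:ℝ)..1, q x y * q y z * q z x)
            = ∫ z in (0:ℝ)..1, (if z ≤ 1/2 then (ε-c)*(ε-c)*(ε-c)
                else (ε-c)*(ε+c)*(ε+c)) := by
          apply intervalIntegral.integral_congr
          intro z _
          dsimp only
          rw [hq x y, hq y z, hq z x]
          by_cases hz' : z ≤ (1:ℝ)/2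
          · rw [if_pos (Or.inl ⟨hx, hy⟩), if_pos (Or.inl ⟨hy, hz'⟩),
              if_pos (Or.inl ⟨hz', hx⟩), if_pos hz']
          · have hz2 := not_le.1 hz'
            rw [if_pos (Or.inl ⟨hx, hy⟩), if_neg (hP _ _ hy hz2),
              if_neg (hP' _ _ hz2 hx), if_neg hz']
        rw [h1, step_int, if_pos (Or.inl ⟨hx, hy⟩), hD]; ring
      · have h1 : (∫ z in (0:ℝ)..1, q x y * q y z * q z x)
            = ∫ z in (0:ℝ)..1, (if z ≤ 1/2 then (ε+c)*(ε+c)*(ε-c)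
                else (ε+c)*(ε-c)*(ε+c)) := by
          apply intervalIntegral.integral_congr
          intro z _
          dsimp only
          rw [hq x y, hq y z, hq z x]
          by_cases hz' : z ≤ (1:ℝ)/2
          · rw [if_neg (hP _ _ hx hy), if_neg (hP' _ _ hy hz'),
              if_pos (Or.inl ⟨hz', hx⟩), if_pos hz']
          · have hz2 := not_le.1 hz'
            rw [if_neg (hP _ _ hx hy), if_pos (Or.inr ⟨hy, hz2⟩),
              if_neg (hP' _ _ hz2 hx), if_neg hz']
        rw [h1, step_int, if_neg (hP _ _ hx hy), hF]; ring
      · have h1 : (∫ z in (0:ℝ)..1, q x y * q y z * q z x)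
            = ∫ z in (0:ℝ)..1, (if z ≤ 1/2 then (ε+c)*(ε-c)*(ε+c)
                else (ε+c)*(ε+c)*(ε-c)) := by
          apply intervalIntegral.integral_congr
          intro z _
          dsimp only
          rw [hq x y, hq y z, hq z x]
          by_cases hz' : z ≤ (1:ℝ)/2
          · rw [if_neg (hP' _ _ hx hy), if_pos (Or.inl ⟨hy, hz'⟩),
              if_neg (hP _ _ hz' hx), if_pos hz']
          · have hz2 := not_le.1 hz'
            rw [if_neg (hP' _ _ hx hy), if_neg (hP _ _ hy hz2),
              if_pos (Or.inr ⟨hz2, hx⟩), if_neg hz']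
        rw [h1, step_int, if_neg (hP' _ _ hx hy), hF]; ring
      · have h1 : (∫ z in (0:ℝ)..1, q x y * q y z * q z x)
            = ∫ z in (0:ℝ)..1, (if z ≤ 1/2 then (ε-c)*(ε+c)*(ε+c)
                else (ε-c)*(ε-c)*(ε-c)) := by
          apply intervalIntegral.integral_congr
          intro z _
          dsimp only
          rw [hq x y, hq y z, hq z x]
          by_cases hz' : z ≤ (1:ℝ)/2
          · rw [if_pos (Or.inr ⟨hx, hy⟩), if_neg (hP' _ _ hy hz'),
              if_neg (hP _ _ hz' hx), if_pos hz']
          · have hz2 := not_le.1 hz'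
            rw [if_pos (Or.inr ⟨hx, hy⟩), if_pos (Or.inr ⟨hy, hz2⟩),
              if_pos (Or.inr ⟨hz2, hx⟩), if_neg hz']
        rw [h1, step_int, if_pos (Or.inr ⟨hx, hy⟩), hD]; ring
    have hmid : ∀ x : ℝ,
        (∫ y in (0:ℝ)..1, ∫ z in (0:ℝ)..1, q x y * q y z * q z x) = (D + F) / 2 := by
      intro x
      rcases le_or_gt x (1/2) with hx | hx
      · have h2 : (∫ y in (0:ℝ)..1, ∫ z in (0:ℝ)..1, q x y * q y z * q z x)
            = ∫ y in (0:ℝ)..1, (if y ≤ 1/2 then D else F) := by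
          apply intervalIntegral.integral_congr
          intro y _
          dsimp only
          rw [hz x y]
          by_cases hy : y ≤ (1:ℝ)/2
          · rw [if_pos (Or.inl ⟨hx, hy⟩), if_pos hy]
          · rw [if_neg (hP _ _ hx (not_le.1 hy)), if_neg hy]
        rw [h2, step_int]
      · have h2 : (∫ y in (0:ℝ)..1, ∫ z in (0:ℝ)..1, q x y * q y z * q z x)
            = ∫ y in (0:ℝ)..1, (if y ≤ 1/2 then F else D) := by
          apply intervalIntegral.integral_congr
          intro y _
          dsimp only
          rw [hz x y]
          by_cases hy : y ≤ (1:ℝ)/2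
          · rw [if_neg (hP' _ _ hx hy), if_pos hy]
          · rw [if_pos (Or.inr ⟨hx, not_le.1 hy⟩), if_neg hy]
        rw [h2, step_int]; ring
    unfold triangleDensity
    rw [intervalIntegral.integral_congr (fun x _ => hmid x)]
    simp only [intervalIntegral.integral_const, smul_eq_mul, sub_zero, one_mul]
    rw [hD, hF]
    have hTT : ((ε - c) * (((ε - c)^2 + (ε + c)^2) / 2)
        + (ε + c) * ((ε - c) * (ε + c))) / 2 = ε ^ 3 - c ^ 3 := by ring
    rw [hTT, hc3]
    ring
end

section
/- For every finite simple graph H with k vertices, the map q ↦ t_H(q) is Lipschitz on the space of graphons with respect to the cut norm: |t_H(f) - t_H(g)| ≤ |E(H)| · d_□(f,g), where d_□(f,g) = sup_{S,T ⊆ [0,1]} |∫_{S×T} (f - g)|. -/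
open MeasureTheory

open Set Function

noncomputable def muI : Measure ℝ := volume.restrict (Set.Icc 0 1)

instance : IsProbabilityMeasure muI :=
  ⟨by simp [muI, Real.volume_Icc]⟩

lemma integrable_of_bound {α : Type*} [MeasurableSpace α] (μ : Measure α) [IsFiniteMeasure μ]
    (h : α → ℝ) (hm : Measurable h) (C : ℝ) (hb : ∀ x, |h x| ≤ C) : Integrable h μ :=
  (integrable_const C).mono' hm.aestronglyMeasurable (ae_of_all _ fun x => by
    simpa [Real.norm_eq_abs] using hb x)

lemma step_A (h φ : ℝ → ℝ) (hhm : Measurable h) (hh : Integrable h muI)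
    (hφ : Measurable φ) (hφ1 : ∀ x, φ x ∈ Set.Icc (0:ℝ) 1) :
    ∃ S : Set ℝ, MeasurableSet S ∧ |∫ x, φ x * h x ∂muI| ≤ |∫ x in S, h x ∂muI| := by
  set P : Set ℝ := {x | 0 < h x} with hP
  have hPm : MeasurableSet P := measurableSet_lt measurable_const hhm
  have hint : Integrable (fun x => φ x * h x) muI :=
    hh.bdd_mul (c := 1) hφ.aestronglyMeasurable (ae_of_all _ fun x => by
      simpa [Real.norm_eq_abs, abs_of_nonneg (hφ1 x).1] using (hφ1 x).2)
  have h1 : ∫ x, φ x * h x ∂muI = (∫ x in P, φ x * h x ∂muI) + ∫ x in Pᶜ, φ x * h x ∂muI :=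
    (integral_add_compl hPm hint).symm
  have hup : ∫ x in P, φ x * h x ∂muI ≤ ∫ x in P, h x ∂muI := by
    apply setIntegral_mono_on hint.integrableOn hh.integrableOn hPm
    intro x hx
    exact mul_le_of_le_one_left (le_of_lt hx) (hφ1 x).2
  have hup0 : 0 ≤ ∫ x in P, φ x * h x ∂muI :=
    setIntegral_nonneg hPm fun x hx => mul_nonneg (hφ1 x).1 (le_of_lt hx)
  have hlo : ∫ x in Pᶜ, h x ∂muI ≤ ∫ x in Pᶜ, φ x * h x ∂muI := by
    apply setIntegral_mono_on hh.integrableOn hint.integrableOn hPm.compl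
    intro x hx
    have hx' : h x ≤ 0 := not_lt.mp hx
    nlinarith [(hφ1 x).1, (hφ1 x).2]
  have hlo0 : ∫ x in Pᶜ, φ x * h x ∂muI ≤ 0 :=
    setIntegral_nonpos hPm.compl fun x hx => mul_nonpos_of_nonneg_of_nonpos (hφ1 x).1 (not_lt.mp hx)
  rcases le_total 0 (∫ x, φ x * h x ∂muI) with hc | hc
  · refine ⟨P, hPm, ?_⟩
    rw [abs_of_nonneg hc]
    have h2 : ∫ x, φ x * h x ∂muI ≤ ∫ x in P, h x ∂muI := by
      calc ∫ x, φ x * h x ∂muI ≤ (∫ x in P, φ x * h x ∂muI) + 0 := by rw [h1]; linarith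
      _ ≤ ∫ x in P, h x ∂muI := by linarith
    exact h2.trans (le_abs_self _)
  · refine ⟨Pᶜ, hPm.compl, ?_⟩
    rw [abs_of_nonpos hc]
    have h2 : ∫ x in Pᶜ, h x ∂muI ≤ ∫ x, φ x * h x ∂muI := by
      calc ∫ x in Pᶜ, h x ∂muI ≤ ∫ x in Pᶜ, φ x * h x ∂muI := hlo
      _ ≤ 0 + ∫ x in Pᶜ, φ x * h x ∂muI := by linarith
      _ ≤ ∫ x, φ x * h x ∂muI := by rw [h1]; linarith
    have := neg_le_neg h2
    exact this.trans (neg_le_abs _)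

lemma step_Bil (F : ℝ → ℝ → ℝ) (hF : Measurable (uncurry F)) (hFb : ∀ x y, |F x y| ≤ 1)
    (δ : ℝ)
    (hδ : ∀ S T : Set ℝ, MeasurableSet S → MeasurableSet T →
      |∫ x in S, ∫ y in T, F x y ∂muI ∂muI| ≤ δ)
    (φ ψ : ℝ → ℝ) (hφ : Measurable φ) (hψ : Measurable ψ)
    (hφ1 : ∀ x, φ x ∈ Set.Icc (0:ℝ) 1) (hψ1 : ∀ x, ψ x ∈ Set.Icc (0:ℝ) 1) :
    |∫ x, ∫ y, F x y * (φ x * ψ y) ∂muI ∂muI| ≤ δ := by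
  have hψb : ∀ y, |ψ y| ≤ 1 := fun y => by
    rw [abs_of_nonneg (hψ1 y).1]; exact (hψ1 y).2
  have hφb : ∀ y, |φ y| ≤ 1 := fun y => by
    rw [abs_of_nonneg (hφ1 y).1]; exact (hφ1 y).2
  -- h x = ∫ y, F x y * ψ y
  set h : ℝ → ℝ := fun x => ∫ y, F x y * ψ y ∂muI with hh_def
  have hFψm : Measurable (fun p : ℝ × ℝ => F p.1 p.2 * ψ p.2) :=
    hF.mul (hψ.comp measurable_snd)
  have hhm : Measurable h :=
    (StronglyMeasurable.integral_prod_right' (f := fun p : ℝ × ℝ => F p.1 p.2 * ψ p.2)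
      hFψm.stronglyMeasurable).measurable
  have hhb : ∀ x, |h x| ≤ 1 := by
    intro x
    have : ‖∫ y, F x y * ψ y ∂muI‖ ≤ 1 * (muI Set.univ).toReal := by
      apply norm_integral_le_of_norm_le_const
      refine ae_of_all _ fun y => ?_
      rw [Real.norm_eq_abs, abs_mul]
      exact mul_le_one₀ (hFb x y) (abs_nonneg _) (hψb y)
    simpa [Real.norm_eq_abs] using this
  have hhint : Integrable h muI := integrable_of_bound _ h hhm 1 hhb
  have step1 : |∫ x, φ x * h x ∂muI| ≤ δ := by
    obtain ⟨S, hSm, hS⟩ := step_A h φ hhm hhint hφ hφ1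
    refine hS.trans ?_
    -- swap: ∫ x in S, ∫ y, F x y * ψ y = ∫ y, ∫ x in S, F x y * ψ y
    have hswap : ∫ x in S, h x ∂muI = ∫ y, (∫ x in S, F x y ∂muI) * ψ y ∂muI := by
      rw [hh_def]
      rw [integral_integral_swap]
      · congr 1
        ext y
        rw [integral_mul_const]
      · apply integrable_of_bound _ _ (hF.mul (hψ.comp measurable_snd)) 1
        intro p
        show |F p.1 p.2 * ψ p.2| ≤ 1
        rw [abs_mul]
        exact mul_le_one₀ (hFb p.1 p.2) (abs_nonneg _) (hψb p.2)
    rw [hswap]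
    set h' : ℝ → ℝ := fun y => ∫ x in S, F x y ∂muI with hh'_def
    have hh'm : Measurable h' := by
      have := (StronglyMeasurable.integral_prod_right'
        (f := fun p : ℝ × ℝ => F p.2 p.1) (ν := muI.restrict S)
        (hF.comp measurable_swap).stronglyMeasurable).measurable
      exact this
    have hSle : (muI.restrict S Set.univ).toReal ≤ 1 := by
      rw [Measure.restrict_apply_univ]
      have h1 : muI S ≤ muI Set.univ := measure_mono (Set.subset_univ S)
      have h2 : muI Set.univ = 1 := measure_univ
      rw [h2] at h1
      simpa using ENNReal.toReal_mono (by simp) h1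
    have hh'b : ∀ y, |h' y| ≤ 1 := by
      intro y
      have : ‖∫ x in S, F x y ∂muI‖ ≤ 1 * (muI.restrict S Set.univ).toReal := by
        apply norm_integral_le_of_norm_le_const
        exact ae_of_all _ fun x => by rw [Real.norm_eq_abs]; exact hFb x y
      rw [one_mul] at this
      calc |h' y| ≤ (muI.restrict S Set.univ).toReal := by simpa [Real.norm_eq_abs] using this
        _ ≤ 1 := hSle
    have hh'int : Integrable h' muI := integrable_of_bound _ h' hh'm 1 hh'b
    have heq : ∫ y, (∫ x in S, F x y ∂muI) * ψ y ∂muI = ∫ y, ψ y * h' y ∂muI := by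
      congr 1; ext y; rw [mul_comm]
    rw [heq]
    obtain ⟨T, hTm, hT⟩ := step_A h' ψ hh'm hh'int hψ hψ1
    refine hT.trans ?_
    have hswap2 : ∫ y in T, h' y ∂muI = ∫ x in S, ∫ y in T, F x y ∂muI ∂muI := by
      rw [hh'_def]
      rw [← integral_integral_swap]
      apply integrable_of_bound _ _ hF 1
      intro p
      exact hFb p.1 p.2
    rw [hswap2]
    exact hδ S T hSm hTm
  -- rearrange goal to φ x * h x
  have : ∀ x, ∫ y, F x y * (φ x * ψ y) ∂muI = φ x * h x := by
    intro x
    rw [hh_def]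
    simp only
    rw [← integral_const_mul]
    congr 1; ext y; ring
  calc |∫ x, ∫ y, F x y * (φ x * ψ y) ∂muI ∂muI| = |∫ x, φ x * h x ∂muI| := by
        congr 1; exact integral_congr_ae (ae_of_all _ this)
    _ ≤ δ := step1

lemma measurable_update_map {k : ℕ} (u : Fin k) :
    Measurable (fun p : ℝ × (Fin k → ℝ) => Function.update p.2 u p.1) := by
  apply measurable_pi_lambda
  intro i
  by_cases hi : i = u
  · subst hi
    simpa [Function.update_self] using (measurable_fst : Measurable fun p : ℝ × (Fin k → ℝ) => p.1)
  · simpa [Function.update_of_ne hi, Function.comp_def] using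
      ((measurable_pi_apply i).comp (measurable_snd : Measurable fun p : ℝ × (Fin k → ℝ) => p.2))

lemma measurePreserving_update (ν : Measure ℝ) [IsProbabilityMeasure ν] {k : ℕ} (u : Fin k) :
    MeasurePreserving (fun p : ℝ × (Fin k → ℝ) => Function.update p.2 u p.1)
      (ν.prod (Measure.pi fun _ => ν)) (Measure.pi fun _ => ν) := by
  refine ⟨measurable_update_map u, ?_⟩
  refine (Measure.pi_eq ?_).symm
  intro s hs
  rw [Measure.map_apply (measurable_update_map u) (MeasurableSet.univ_pi hs)]
  have hpre : (fun p : ℝ × (Fin k → ℝ) => Function.update p.2 u p.1) ⁻¹'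
      (Set.pi Set.univ s) = s u ×ˢ Set.pi Set.univ (Function.update s u Set.univ) := by
    ext p
    simp only [Set.mem_preimage, Set.mem_pi, Set.mem_univ, forall_true_left, Set.mem_prod]
    constructor
    · intro h
      refine ⟨by simpa using h u, fun i => ?_⟩
      by_cases hi : i = u
      · subst hi; simp
      · simpa [Function.update_of_ne hi] using h i
    · rintro ⟨h1, h2⟩ i
      by_cases hi : i = u
      · subst hi; simpa using h1
      · have := h2 i
        simpa [Function.update_of_ne hi] using this
  rw [hpre, Measure.prod_prod, Measure.pi_pi]
  have : ∏ i, ν (Function.update s u Set.univ i) = ∏ i ∈ Finset.univ.erase u, ν (s i) := by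
    rw [← Finset.prod_erase_mul _ _ (Finset.mem_univ u)]
    simp only [Function.update_self, measure_univ, mul_one]
    apply Finset.prod_congr rfl
    intro i hi
    rw [Function.update_of_ne (Finset.ne_of_mem_erase hi)]
  rw [this, ← Finset.mul_prod_erase _ _ (Finset.mem_univ u)]

lemma integral_update_eq (ν : Measure ℝ) [IsProbabilityMeasure ν] {k : ℕ} (u : Fin k)
    (h : (Fin k → ℝ) → ℝ) (hm : Measurable h) (hb : ∀ x, |h x| ≤ 1) :
    ∫ x, h x ∂(Measure.pi fun _ : Fin k => ν) =
      ∫ x, (∫ a, h (Function.update x u a) ∂ν) ∂(Measure.pi fun _ : Fin k => ν) := by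
  have hmp := measurePreserving_update ν u
  have hint : Integrable (fun p : ℝ × (Fin k → ℝ) => h (Function.update p.2 u p.1))
      (ν.prod (Measure.pi fun _ => ν)) := by
    apply integrable_of_bound _ _ (hm.comp (measurable_update_map u)) 1
    intro p; exact hb _
  calc ∫ x, h x ∂(Measure.pi fun _ : Fin k => ν)
      = ∫ p : ℝ × (Fin k → ℝ), h (Function.update p.2 u p.1) ∂(ν.prod (Measure.pi fun _ => ν)) := by
        have hmap := integral_map (μ := ν.prod (Measure.pi fun _ : Fin k => ν))
          (measurable_update_map u).aemeasurable (f := h) hm.aestronglyMeasurable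
        rw [hmp.map_eq] at hmap
        exact hmap
    _ = ∫ a, ∫ x, h (Function.update x u a) ∂(Measure.pi fun _ : Fin k => ν) ∂ν :=
        integral_prod _ hint
    _ = ∫ x, (∫ a, h (Function.update x u a) ∂ν) ∂(Measure.pi fun _ : Fin k => ν) := by
        apply integral_integral_swap
        apply integrable_of_bound _ _ (hm.comp (measurable_update_map u)) 1
        intro p; exact hb _

lemma step_B {k : ℕ} (u v : Fin k) (huv : u ≠ v)
    (F : ℝ → ℝ → ℝ) (hF : Measurable (uncurry F)) (hFb : ∀ x y, |F x y| ≤ 1)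
    (δ : ℝ) (hδ0 : 0 ≤ δ)
    (hBil : ∀ φ ψ : ℝ → ℝ, Measurable φ → Measurable ψ →
      (∀ x, φ x ∈ Set.Icc (0:ℝ) 1) → (∀ x, ψ x ∈ Set.Icc (0:ℝ) 1) →
      |∫ x, ∫ y, F x y * (φ x * ψ y) ∂muI ∂muI| ≤ δ)
    (Φ Ψ : (Fin k → ℝ) → ℝ) (hΦm : Measurable Φ) (hΨm : Measurable Ψ)
    (hΦ1 : ∀ x, Φ x ∈ Set.Icc (0:ℝ) 1) (hΨ1 : ∀ x, Ψ x ∈ Set.Icc (0:ℝ) 1)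
    (hΦv : ∀ x b, Φ (Function.update x v b) = Φ x)
    (hΨu : ∀ x a, Ψ (Function.update x u a) = Ψ x) :
    |∫ x, F (x u) (x v) * (Φ x * Ψ x) ∂(Measure.pi fun _ : Fin k => muI)| ≤ δ := by
  set π : Measure (Fin k → ℝ) := Measure.pi fun _ : Fin k => muI with hπ
  set h : (Fin k → ℝ) → ℝ := fun x => F (x u) (x v) * (Φ x * Ψ x) with hh
  have hFm' : Measurable fun x : Fin k → ℝ => F (x u) (x v) := by
    have : Measurable fun x : Fin k → ℝ => (x u, x v) :=
      (measurable_pi_apply u).prodMk (measurable_pi_apply v)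
    exact hF.comp this
  have hhm : Measurable h := hFm'.mul (hΦm.mul hΨm)
  have hhb : ∀ x, |h x| ≤ 1 := by
    intro x
    rw [hh]
    simp only
    rw [abs_mul, abs_mul]
    have h1 := hFb (x u) (x v)
    have h2 := hΦ1 x; have h3 := hΨ1 x
    rw [abs_of_nonneg h2.1, abs_of_nonneg h3.1]
    have hp : Φ x * Ψ x ≤ 1 := mul_le_one₀ h2.2 h3.1 h3.2
    have hp0 : 0 ≤ Φ x * Ψ x := mul_nonneg h2.1 h3.1
    nlinarith [abs_nonneg (F (x u) (x v))]
  -- inner function after updating coordinate v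
  set g1 : (Fin k → ℝ) → ℝ := fun x => ∫ b, h (Function.update x v b) ∂muI with hg1
  have hg1m : Measurable g1 := by
    have : Measurable fun p : (Fin k → ℝ) × ℝ => h (Function.update p.1 v p.2) := by
      have := (measurable_update_map (k := k) v).comp
        (measurable_swap : Measurable fun p : (Fin k → ℝ) × ℝ => (p.2, p.1))
      exact hhm.comp this
    exact (StronglyMeasurable.integral_prod_right' this.stronglyMeasurable).measurable
  have hg1b : ∀ x, |g1 x| ≤ 1 := by
    intro x
    have : ‖∫ b, h (Function.update x v b) ∂muI‖ ≤ 1 * (muI Set.univ).toReal := by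
      apply norm_integral_le_of_norm_le_const
      exact ae_of_all _ fun b => by rw [Real.norm_eq_abs]; exact hhb _
    simpa [Real.norm_eq_abs] using this
  have e1 : ∫ x, h x ∂π = ∫ x, g1 x ∂π := integral_update_eq muI v h hhm hhb
  have e2 : ∫ x, g1 x ∂π = ∫ x, (∫ a, g1 (Function.update x u a) ∂muI) ∂π :=
    integral_update_eq muI u g1 hg1m hg1b
  -- the inner double integral is a bilinear pairing
  have key : ∀ x : Fin k → ℝ, |∫ a, g1 (Function.update x u a) ∂muI| ≤ δ := by
    intro x
    set φ : ℝ → ℝ := fun a => Φ (Function.update x u a) with hφ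
    set ψ : ℝ → ℝ := fun b => Ψ (Function.update x v b) with hψ
    have hinner : ∀ a, g1 (Function.update x u a) = ∫ b, F a b * (φ a * ψ b) ∂muI := by
      intro a
      rw [hg1]
      simp only
      congr 1
      ext b
      have hcoord_u : Function.update (Function.update x u a) v b u = a := by
        rw [Function.update_of_ne huv, Function.update_self]
      have hcoord_v : Function.update (Function.update x u a) v b v = b :=
        Function.update_self _ _ _
      have hΦeq : Φ (Function.update (Function.update x u a) v b) = φ a := by
        rw [hΦv]
      have hΨeq : Ψ (Function.update (Function.update x u a) v b) = ψ b := by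
        rw [Function.update_comm huv, hΨu]
      rw [hh]
      simp only
      rw [hcoord_u, hcoord_v, hΦeq, hΨeq]
    have : ∫ a, g1 (Function.update x u a) ∂muI = ∫ a, ∫ b, F a b * (φ a * ψ b) ∂muI ∂muI :=
      integral_congr_ae (ae_of_all _ hinner)
    rw [this]
    exact hBil φ ψ (hΦm.comp (measurable_update x)) (hΨm.comp (measurable_update x))
      (fun a => hΦ1 _) (fun b => hΨ1 _)
  rw [e1, e2]
  have : ‖∫ x, (∫ a, g1 (Function.update x u a) ∂muI) ∂π‖ ≤ δ * (π Set.univ).toReal := by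
    apply norm_integral_le_of_norm_le_const
    exact ae_of_all _ fun x => by rw [Real.norm_eq_abs]; exact key x
  simpa [Real.norm_eq_abs] using this

lemma sym2_mk_inf_sup {α : Type*} [LinearOrder α] (e : Sym2 α) : s(e.inf, e.sup) = e := by
  induction e using Sym2.ind with
  | _ a b =>
    rcases le_total a b with h | h
    · simp [Sym2.inf_mk, Sym2.sup_mk, inf_eq_left.mpr h, sup_eq_right.mpr h]
    · rw [Sym2.inf_mk, Sym2.sup_mk, inf_eq_right.mpr h, sup_eq_left.mpr h, Sym2.eq_swap]

lemma sym2_inf_mem {α : Type*} [LinearOrder α] (e : Sym2 α) : e.inf ∈ e := by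
  induction e using Sym2.ind with
  | _ a b =>
    rw [Sym2.inf_mk]
    rcases le_total a b with h | h
    · rw [inf_eq_left.mpr h]; exact Sym2.mem_mk_left a b
    · rw [inf_eq_right.mpr h]; exact Sym2.mem_mk_right a b

lemma sym2_sup_mem {α : Type*} [LinearOrder α] (e : Sym2 α) : e.sup ∈ e := by
  induction e using Sym2.ind with
  | _ a b =>
    rw [Sym2.sup_mk]
    rcases le_total a b with h | h
    · rw [sup_eq_right.mpr h]; exact Sym2.mem_mk_right a b
    · rw [sup_eq_left.mpr h]; exact Sym2.mem_mk_left a b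

lemma sym2_inf_ne_sup {α : Type*} [LinearOrder α] {e : Sym2 α} (h : ¬e.IsDiag) :
    e.inf ≠ e.sup := by
  induction e using Sym2.ind with
  | _ a b =>
    rw [Sym2.mk_isDiag_iff] at h
    rw [Sym2.inf_mk, Sym2.sup_mk]
    rcases lt_or_gt_of_ne h with h' | h'
    · exact ne_of_lt (by simpa [inf_eq_left.mpr h'.le, sup_eq_right.mpr h'.le] using h')
    · exact ne_of_lt (by simpa [inf_eq_right.mpr h'.le, sup_eq_left.mpr h'.le] using h')

lemma sym2_eq_of_mem_mem {α : Type*} [DecidableEq α] {e : Sym2 α} {a b : α} (hab : a ≠ b)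
    (ha : a ∈ e) (hb : b ∈ e) : e = s(a, b) := by
  induction e using Sym2.ind with
  | _ x y =>
    rw [Sym2.mem_iff] at ha hb
    rcases ha with rfl | rfl <;> rcases hb with h | h <;>
      first
      | exact absurd rfl hab
      | (subst h; rfl)
      | (subst h; exact Sym2.eq_swap)
      | (exact absurd h.symm hab)

lemma restrict_pi_cube {k : ℕ} :
    (volume : Measure (Fin k → ℝ)).restrict (Set.univ.pi fun _ => Set.Icc (0:ℝ) 1) =
      Measure.pi fun _ : Fin k => volume.restrict (Set.Icc (0:ℝ) 1) := by
  rw [MeasureTheory.volume_pi]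
  have : ∀ s : Fin k → Set ℝ, (∀ i, MeasurableSet (s i)) →
      ((Measure.pi fun _ : Fin k => (volume : Measure ℝ)).restrict
        (Set.univ.pi fun _ => Set.Icc (0:ℝ) 1)) (Set.pi Set.univ s) =
      ∏ i, (volume.restrict (Set.Icc (0:ℝ) 1)) (s i) := ?_
  · exact (Measure.pi_eq this).symm
  intro s hs
  rw [Measure.restrict_apply (MeasurableSet.univ_pi hs)]
  have : (Set.pi Set.univ s) ∩ (Set.univ.pi fun _ => Set.Icc (0:ℝ) 1) =
      Set.pi Set.univ fun i => s i ∩ Set.Icc (0:ℝ) 1 := by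
    rw [← Set.pi_inter_distrib]
  rw [this, Measure.pi_pi]
  apply Finset.prod_congr rfl
  intro i _
  rw [Measure.restrict_apply (hs i)]

/-- Homomorphism density `t_H(q)` of `H` in a kernel `q`. -/
noncomputable def homDensity {k : ℕ} (H : SimpleGraph (Fin k)) [DecidableRel H.Adj]
    (q : ℝ → ℝ → ℝ) : ℝ :=
  ∫ x : Fin k → ℝ in Set.univ.pi (fun _ => Set.Icc (0:ℝ) 1),
    ∏ e ∈ H.edgeFinset, q (x e.inf) (x e.sup)

/-- Counting lemma: homomorphism densities are Lipschitz in the cut norm,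
`|t_H(f) - t_H(g)| ≤ |E(H)| · d_□(f,g)`.  We phrase it via an upper bound `δ` on the
cut norm, `sup_{S,T} |∫_{S×T} (f-g)| ≤ δ`. -/
theorem counting_lemma
    {k : ℕ} (H : SimpleGraph (Fin k)) [DecidableRel H.Adj]
    (f g : ℝ → ℝ → ℝ)
    (hf : Measurable (Function.uncurry f)) (hg : Measurable (Function.uncurry g))
    (hfr : ∀ x y, f x y ∈ Set.Icc (0:ℝ) 1) (hgr : ∀ x y, g x y ∈ Set.Icc (0:ℝ) 1)
    (hfs : ∀ x y, f x y = f y x) (hgs : ∀ x y, g x y = g y x)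
    (δ : ℝ)
    (hδ : ∀ S T : Set ℝ, MeasurableSet S → MeasurableSet T →
      |∫ x in S ∩ Set.Icc (0:ℝ) 1, ∫ y in T ∩ Set.Icc (0:ℝ) 1, (f x y - g x y)| ≤ δ) :
    |homDensity H f - homDensity H g| ≤ (H.edgeFinset.card : ℝ) * δ := by
  classical
  set π : Measure (Fin k → ℝ) := Measure.pi fun _ : Fin k => muI with hπdef
  set F : ℝ → ℝ → ℝ := fun x y => f x y - g x y with hFdef
  have hFm : Measurable (Function.uncurry F) := hf.sub hg
  have hFb : ∀ x y, |F x y| ≤ 1 := by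
    intro x y
    have h1 := hfr x y; have h2 := hgr x y
    rw [abs_le]
    constructor <;> simp only [hFdef] <;>
      [linarith [h1.1, h2.2]; linarith [h1.2, h2.1]]
  have hδ0 : 0 ≤ δ := by
    have := hδ ∅ ∅ MeasurableSet.empty MeasurableSet.empty
    simpa using this
  have hδmu : ∀ S T : Set ℝ, MeasurableSet S → MeasurableSet T →
      |∫ x in S, ∫ y in T, F x y ∂muI ∂muI| ≤ δ := by
    intro S T hS hT
    have h1 : muI.restrict S = volume.restrict (S ∩ Set.Icc (0:ℝ) 1) := by
      rw [muI]; exact Measure.restrict_restrict hS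
    have h2 : muI.restrict T = volume.restrict (T ∩ Set.Icc (0:ℝ) 1) := by
      rw [muI]; exact Measure.restrict_restrict hT
    calc |∫ x in S, ∫ y in T, F x y ∂muI ∂muI|
        = |∫ x in S ∩ Set.Icc (0:ℝ) 1, ∫ y in T ∩ Set.Icc (0:ℝ) 1, (f x y - g x y)| := by
          rw [h1, h2]
      _ ≤ δ := hδ S T hS hT
  have hBil := step_Bil F hFm hFb δ hδmu
  set E : Finset (Sym2 (Fin k)) := H.edgeFinset with hEdef
  -- measurability of single factors
  have hfacm : ∀ (q : ℝ → ℝ → ℝ), Measurable (Function.uncurry q) → ∀ i j : Fin k,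
      Measurable fun x : Fin k → ℝ => q (x i) (x j) := by
    intro q hq i j
    have : Measurable fun x : Fin k → ℝ => (x i, x j) :=
      (measurable_pi_apply i).prodMk (measurable_pi_apply j)
    exact hq.comp this
  -- the hybrid products
  set P : Finset (Sym2 (Fin k)) → (Fin k → ℝ) → ℝ := fun A x =>
    (∏ e ∈ A, f (x e.inf) (x e.sup)) * ∏ e ∈ E \ A, g (x e.inf) (x e.sup) with hPdef
  have hprodm : ∀ (q : ℝ → ℝ → ℝ), Measurable (Function.uncurry q) →
      ∀ A : Finset (Sym2 (Fin k)),
      Measurable fun x : Fin k → ℝ => ∏ e ∈ A, q (x e.inf) (x e.sup) := by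
    intro q hq A
    apply Finset.measurable_prod
    intro e _
    exact hfacm q hq e.inf e.sup
  have hprodr : ∀ (q : ℝ → ℝ → ℝ), (∀ x y, q x y ∈ Set.Icc (0:ℝ) 1) →
      ∀ (A : Finset (Sym2 (Fin k))) (x : Fin k → ℝ),
      (∏ e ∈ A, q (x e.inf) (x e.sup)) ∈ Set.Icc (0:ℝ) 1 := by
    intro q hq A x
    constructor
    · exact Finset.prod_nonneg fun e _ => (hq _ _).1
    · exact Finset.prod_le_one (fun e _ => (hq _ _).1) (fun e _ => (hq _ _).2)
  have hPm : ∀ A, Measurable (P A) := fun A => (hprodm f hf A).mul (hprodm g hg _)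
  have hPr : ∀ A x, P A x ∈ Set.Icc (0:ℝ) 1 := by
    intro A x
    have h1 := hprodr f hfr A x
    have h2 := hprodr g hgr (E \ A) x
    exact ⟨mul_nonneg h1.1 h2.1, mul_le_one₀ h1.2 h2.1 h2.2⟩
  have hPb : ∀ A x, |P A x| ≤ 1 := fun A x => by
    rw [abs_of_nonneg (hPr A x).1]; exact (hPr A x).2
  have hPint : ∀ A, Integrable (P A) π := fun A =>
    integrable_of_bound π (P A) (hPm A) 1 (hPb A)
  -- identification of homDensity with ∫ ∂π
  have hcube : ∀ (q : ℝ → ℝ → ℝ),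
      homDensity H q = ∫ x, (∏ e ∈ E, q (x e.inf) (x e.sup)) ∂π := by
    intro q
    rw [homDensity, hπdef]
    rw [show (Measure.pi fun _ : Fin k => muI) =
      (volume : Measure (Fin k → ℝ)).restrict (Set.univ.pi fun _ => Set.Icc (0:ℝ) 1) from
      restrict_pi_cube.symm]
  have hTf : homDensity H f = ∫ x, P E x ∂π := by
    rw [hcube f]
    apply integral_congr_ae (ae_of_all _ _)
    intro x
    simp [hPdef]
  have hTg : homDensity H g = ∫ x, P ∅ x ∂π := by
    rw [hcube g]
    apply integral_congr_ae (ae_of_all _ _)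
    intro x
    simp [hPdef]
  -- the key induction
  have key : ∀ A : Finset (Sym2 (Fin k)), A ⊆ E →
      |(∫ x, P A x ∂π) - ∫ x, P ∅ x ∂π| ≤ A.card * δ := by
    intro A
    induction A using Finset.induction_on with
    | empty => intro _; simp
    | @insert e A henA ih =>
      intro hsub
      have he : e ∈ E := hsub (Finset.mem_insert_self e A)
      have hAsub : A ⊆ E := fun a ha => hsub (Finset.mem_insert_of_mem ha)
      have hnd : ¬e.IsDiag := by
        have := SimpleGraph.mem_edgeFinset.mp (hEdef ▸ he)
        exact (SimpleGraph.not_isDiag_of_mem_edgeSet H this)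
      set u : Fin k := e.inf with hu
      set v : Fin k := e.sup with hv
      have huv : u ≠ v := sym2_inf_ne_sup hnd
      have hse : s(u, v) = e := sym2_mk_inf_sup e
      set B : Finset (Sym2 (Fin k)) := E \ insert e A with hB
      have heB : e ∉ B := by simp [hB]
      have hEdiff : E \ A = insert e B := by
        ext a
        by_cases ha : a = e
        · subst ha
          simp [he, henA, hB]
        · simp [hB, ha, Finset.mem_sdiff, Finset.mem_insert]
      -- the other-edge exclusion
      have hnotuv : ∀ e' : Sym2 (Fin k), e' ≠ e → ¬(u ∈ e' ∧ v ∈ e') := by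
        rintro e' hne ⟨h1, h2⟩
        exact hne (by rw [sym2_eq_of_mem_mem huv h1 h2, hse])
      -- the split of the weight
      set Φ : (Fin k → ℝ) → ℝ := fun x =>
        (∏ e' ∈ A.filter fun e' => ¬ v ∈ e', f (x e'.inf) (x e'.sup)) *
          ∏ e' ∈ B.filter fun e' => ¬ v ∈ e', g (x e'.inf) (x e'.sup) with hΦdef
      set Ψ : (Fin k → ℝ) → ℝ := fun x =>
        (∏ e' ∈ A.filter fun e' => v ∈ e', f (x e'.inf) (x e'.sup)) *
          ∏ e' ∈ B.filter fun e' => v ∈ e', g (x e'.inf) (x e'.sup) with hΨdef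
      have hW : ∀ x : Fin k → ℝ,
          (∏ e' ∈ A, f (x e'.inf) (x e'.sup)) * (∏ e' ∈ B, g (x e'.inf) (x e'.sup)) =
            Φ x * Ψ x := by
        intro x
        rw [hΦdef, hΨdef]
        simp only
        rw [← Finset.prod_filter_mul_prod_filter_not A (fun e' => v ∈ e')
          (fun e' => f (x e'.inf) (x e'.sup)),
          ← Finset.prod_filter_mul_prod_filter_not B (fun e' => v ∈ e')
          (fun e' => g (x e'.inf) (x e'.sup))]
        ring
      have hΦm : Measurable Φ := by
        apply Measurable.mul
        · exact hprodm f hf _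
        · exact hprodm g hg _
      have hΨm : Measurable Ψ := by
        apply Measurable.mul
        · exact hprodm f hf _
        · exact hprodm g hg _
      have hΦ1 : ∀ x, Φ x ∈ Set.Icc (0:ℝ) 1 := by
        intro x
        have h1 := hprodr f hfr (A.filter fun e' => ¬ v ∈ e') x
        have h2 := hprodr g hgr (B.filter fun e' => ¬ v ∈ e') x
        exact ⟨mul_nonneg h1.1 h2.1, mul_le_one₀ h1.2 h2.1 h2.2⟩
      have hΨ1 : ∀ x, Ψ x ∈ Set.Icc (0:ℝ) 1 := by
        intro x
        have h1 := hprodr f hfr (A.filter fun e' => v ∈ e') x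
        have h2 := hprodr g hgr (B.filter fun e' => v ∈ e') x
        exact ⟨mul_nonneg h1.1 h2.1, mul_le_one₀ h1.2 h2.1 h2.2⟩
      -- invariance of Φ under updating coordinate v
      have hupd : ∀ (x : Fin k → ℝ) (w : Fin k) (c : ℝ) (e' : Sym2 (Fin k)), ¬ w ∈ e' →
          ∀ q : ℝ → ℝ → ℝ,
          q (Function.update x w c e'.inf) (Function.update x w c e'.sup) =
            q (x e'.inf) (x e'.sup) := by
        intro x w c e' hw q
        have h1 : e'.inf ≠ w := fun h => hw (h ▸ sym2_inf_mem e')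
        have h2 : e'.sup ≠ w := fun h => hw (h ▸ sym2_sup_mem e')
        rw [Function.update_of_ne h1, Function.update_of_ne h2]
      have hΦv : ∀ x b, Φ (Function.update x v b) = Φ x := by
        intro x b
        rw [hΦdef]
        simp only
        congr 1
        · apply Finset.prod_congr rfl
          intro e' he'
          exact hupd x v b e' (Finset.mem_filter.mp he').2 f
        · apply Finset.prod_congr rfl
          intro e' he'
          exact hupd x v b e' (Finset.mem_filter.mp he').2 g
      have hΨu : ∀ x a, Ψ (Function.update x u a) = Ψ x := by
        intro x a
        rw [hΨdef]
        simp only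
        congr 1
        · apply Finset.prod_congr rfl
          intro e' he'
          obtain ⟨he'A, he'v⟩ := Finset.mem_filter.mp he'
          have hne : e' ≠ e := fun h => henA (h ▸ he'A)
          have hnu : ¬ u ∈ e' := fun hu' => hnotuv e' hne ⟨hu', he'v⟩
          exact hupd x u a e' hnu f
        · apply Finset.prod_congr rfl
          intro e' he'
          obtain ⟨he'B, he'v⟩ := Finset.mem_filter.mp he'
          have hne : e' ≠ e := by
            intro h
            subst h
            exact heB he'B
          have hnu : ¬ u ∈ e' := fun hu' => hnotuv e' hne ⟨hu', he'v⟩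
          exact hupd x u a e' hnu g
      -- the one-edge swap identity
      have h1 : ∀ x : Fin k → ℝ, P (insert e A) x = f (x u) (x v) * (Φ x * Ψ x) := by
        intro x
        rw [hPdef]
        simp only
        rw [Finset.prod_insert henA, ← hB, mul_assoc, hW x]
      have h2 : ∀ x : Fin k → ℝ, P A x = g (x u) (x v) * (Φ x * Ψ x) := by
        intro x
        rw [hPdef]
        simp only
        rw [hEdiff, Finset.prod_insert heB, ← hW x]
        ring
      have hstep : (∫ x, P (insert e A) x ∂π) - (∫ x, P A x ∂π) =
          ∫ x, F (x u) (x v) * (Φ x * Ψ x) ∂π := by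
        rw [← integral_sub (hPint _) (hPint _)]
        apply integral_congr_ae (ae_of_all _ _)
        intro x
        rw [h1 x, h2 x, hFdef]
        ring
      have hstepb : |(∫ x, P (insert e A) x ∂π) - ∫ x, P A x ∂π| ≤ δ := by
        rw [hstep, hπdef]
        exact step_B u v huv F hFm hFb δ hδ0 hBil Φ Ψ hΦm hΨm hΦ1 hΨ1 hΦv hΨu
      calc |(∫ x, P (insert e A) x ∂π) - ∫ x, P ∅ x ∂π|
          ≤ |(∫ x, P (insert e A) x ∂π) - ∫ x, P A x ∂π| +
            |(∫ x, P A x ∂π) - ∫ x, P ∅ x ∂π| := abs_sub_le _ _ _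
        _ ≤ δ + A.card * δ := add_le_add hstepb (ih hAsub)
        _ ≤ (insert e A).card * δ := by
            rw [Finset.card_insert_of_notMem henA]
            push_cast
            linarith
  have := key E (subset_refl E)
  rw [hTf, hTg]
  exact this
end

section
/- If a sequence of permutons γ_n converges weakly to a permuton γ, then for every pattern τ ∈ S_k the pattern densities converge: ρ_τ(γ_n) → ρ_τ(γ). -/
open MeasureTheory Filter Topology

section PiWeak
set_option linter.unusedSectionVars false
variable {X : Type*} [MeasurableSpace X] [MetricSpace X] [CompactSpace X] [BorelSpace X]
  [SecondCountableTopology X]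

lemma integral_pi_tensor (k : ℕ) (ν : Measure X) [IsProbabilityMeasure ν] (g : Fin k → C(X, ℝ)) :
    ∫ z : Fin k → X, ∏ i, g i (z i) ∂(Measure.pi fun _ => ν) = ∏ i, ∫ x, g i x ∂ν := by
  letI : MeasureSpace X := ⟨ν⟩
  haveI : SigmaFinite (volume : Measure X) := inferInstanceAs (SigmaFinite ν)
  have h : (Measure.pi fun _ : Fin k => ν) = (volume : Measure (Fin k → X)) := by
    rw [MeasureTheory.volume_pi]; rfl
  rw [h]
  exact MeasureTheory.integral_fintype_prod_eq_prod (μ := fun _ => ν) (fun i x => g i x)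

lemma cm_integrable {Y : Type*} [MeasurableSpace Y] [MetricSpace Y] [CompactSpace Y]
    [OpensMeasurableSpace Y] (q : C(Y, ℝ)) (ν : Measure Y) [IsFiniteMeasure ν] :
    Integrable (fun y => q y) ν := by
  exact (BoundedContinuousFunction.mkOfCompact q).integrable ν

lemma cm_integral_diff_le {Y : Type*} [MeasurableSpace Y] [MetricSpace Y] [CompactSpace Y]
    [OpensMeasurableSpace Y] (q a : C(Y, ℝ)) (ν : Measure Y) [IsProbabilityMeasure ν] :
    |(∫ y, q y ∂ν) - ∫ y, a y ∂ν| ≤ dist q a := by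
  rw [← integral_sub (cm_integrable q ν) (cm_integrable a ν)]
  calc |∫ y, (q y - a y) ∂ν| ≤ dist q a * (ν Set.univ).toReal := by
        rw [← Real.norm_eq_abs]
        apply norm_integral_le_of_norm_le_const
        filter_upwards with y
        rw [Real.norm_eq_abs, ← Real.dist_eq]
        exact ContinuousMap.dist_apply_le_dist y
    _ = dist q a := by simp

lemma tendsto_integral_pi (μs : ℕ → Measure X) (μ : Measure X)
    [∀ n, IsProbabilityMeasure (μs n)] [IsProbabilityMeasure μ]
    (h : ∀ f : BoundedContinuousFunction X ℝ,
      Tendsto (fun n => ∫ x, f x ∂(μs n)) atTop (𝓝 (∫ x, f x ∂μ)))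
    (k : ℕ) (f : BoundedContinuousFunction (Fin k → X) ℝ) :
    Tendsto (fun n => ∫ z, f z ∂(Measure.pi fun _ : Fin k => μs n)) atTop
      (𝓝 (∫ z, f z ∂(Measure.pi fun _ : Fin k => μ))) := by
  classical
  set S : Set C((Fin k → X), ℝ) :=
    {p | ∃ (i : Fin k) (g : C(X, ℝ)), p = g.comp ⟨fun z => z i, continuous_apply i⟩} with hS
  -- tensors converge
  have tensor_tendsto : ∀ g : Fin k → C(X, ℝ),
      Tendsto (fun n => ∫ z, (∏ i, g i (z i)) ∂(Measure.pi fun _ : Fin k => μs n)) atTop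
        (𝓝 (∫ z, (∏ i, g i (z i)) ∂(Measure.pi fun _ : Fin k => μ))) := by
    intro g
    simp_rw [integral_pi_tensor]
    refine tendsto_finset_prod _ (fun i _ => ?_)
    simpa using h (BoundedContinuousFunction.mkOfCompact (g i))
  -- elements of the closure of S as a submonoid are tensors
  have tensor_struct : ∀ x ∈ Submonoid.closure S, ∃ g : Fin k → C(X, ℝ),
      ∀ z, x z = ∏ i, g i (z i) := by
    intro x hx
    induction hx using Submonoid.closure_induction with
    | mem x hx =>
      obtain ⟨i, g, rfl⟩ := hx
      refine ⟨fun j => if j = i then g else 1, fun z => ?_⟩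
      rw [Finset.prod_eq_single i (fun b _ hb => by simp [hb]) (by simp)]
      simp
    | one => exact ⟨fun _ => 1, by simp⟩
    | mul x y hx hy ihx ihy =>
      obtain ⟨g, hg⟩ := ihx
      obtain ⟨g', hg'⟩ := ihy
      exact ⟨fun i => g i * g' i, fun z => by
        simp [hg, hg', Finset.prod_mul_distrib]⟩
  -- all elements of the adjoined algebra converge
  have hadj : ∀ q ∈ Algebra.adjoin ℝ S,
      Tendsto (fun n => ∫ z, q z ∂(Measure.pi fun _ : Fin k => μs n)) atTop
        (𝓝 (∫ z, q z ∂(Measure.pi fun _ : Fin k => μ))) := by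
    intro q hq
    rw [← Subalgebra.mem_toSubmodule, Algebra.adjoin_eq_span] at hq
    induction hq using Submodule.span_induction with
    | mem x hx =>
      obtain ⟨g, hg⟩ := tensor_struct x hx
      simp only [hg]
      exact tensor_tendsto g
    | zero => simp only [ContinuousMap.zero_apply, integral_zero]; exact tendsto_const_nhds
    | add x y hx hy ihx ihy =>
      simp only [ContinuousMap.add_apply]
      have hint : ∀ (ν : Measure (Fin k → X)) [IsProbabilityMeasure ν] (w : C((Fin k → X), ℝ)),
          Integrable (fun z => w z) ν := fun ν _ w => cm_integrable w ν
      simp only [integral_add (hint _ x) (hint _ y)]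
      exact ihx.add ihy
    | smul a x hx ihx =>
      simp only [ContinuousMap.smul_apply, smul_eq_mul, integral_const_mul]
      exact ihx.const_mul a
  -- Stone-Weierstrass
  have hsep : (Algebra.adjoin ℝ S).SeparatesPoints := by
    intro x y hxy
    obtain ⟨i, hi⟩ := Function.ne_iff.mp hxy
    refine ⟨_, ⟨(ContinuousMap.mk (fun p => dist p (x i))
        (continuous_id.dist continuous_const)).comp ⟨fun z => z i, continuous_apply i⟩,
        Algebra.subset_adjoin ⟨i, _, rfl⟩, rfl⟩, ?_⟩
    simp only [ContinuousMap.comp_apply, ContinuousMap.coe_mk]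
    simp [dist_eq_zero, hi, Ne.symm hi]
  have key : ∀ q : C((Fin k → X), ℝ),
      Tendsto (fun n => ∫ z, q z ∂(Measure.pi fun _ : Fin k => μs n)) atTop
        (𝓝 (∫ z, q z ∂(Measure.pi fun _ : Fin k => μ))) := by
    intro q
    have hq : q ∈ closure ((Algebra.adjoin ℝ S : Subalgebra ℝ C((Fin k → X), ℝ)) :
        Set C((Fin k → X), ℝ)) :=
      ContinuousMap.continuousMap_mem_subalgebra_closure_of_separatesPoints _ hsep q
    rw [Metric.tendsto_atTop]
    intro ε hε
    obtain ⟨a, haA, hdist⟩ := Metric.mem_closure_iff.mp hq (ε/3) (by linarith)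
    obtain ⟨N, hN⟩ := Metric.tendsto_atTop.mp (hadj a haA) (ε/3) (by linarith)
    refine ⟨N, fun n hn => ?_⟩
    have h1 := cm_integral_diff_le q a (Measure.pi fun _ : Fin k => μs n)
    have h2 := cm_integral_diff_le q a (Measure.pi fun _ : Fin k => μ)
    have h3 := hN n hn
    rw [Real.dist_eq] at h3 ⊢
    have := abs_sub_abs_le_abs_sub ((∫ z, q z ∂(Measure.pi fun _ : Fin k => μs n)))
      (∫ z, q z ∂(Measure.pi fun _ : Fin k => μ))
    calc |(∫ z, q z ∂(Measure.pi fun _ : Fin k => μs n)) -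
            ∫ z, q z ∂(Measure.pi fun _ : Fin k => μ)|
        ≤ |(∫ z, q z ∂(Measure.pi fun _ : Fin k => μs n)) -
            ∫ z, a z ∂(Measure.pi fun _ : Fin k => μs n)| +
          |(∫ z, a z ∂(Measure.pi fun _ : Fin k => μs n)) -
            ∫ z, a z ∂(Measure.pi fun _ : Fin k => μ)| +
          |(∫ z, a z ∂(Measure.pi fun _ : Fin k => μ)) -
            ∫ z, q z ∂(Measure.pi fun _ : Fin k => μ)| := abs_sub_le _ _ _ |>.trans (by gcongr; exact abs_sub_le _ _ _)
      _ < ε := by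
          have h2' : |(∫ z, a z ∂(Measure.pi fun _ : Fin k => μ)) -
              ∫ z, q z ∂(Measure.pi fun _ : Fin k => μ)| ≤ dist q a := by
            rw [abs_sub_comm]; exact h2
          linarith
  exact key f.toContinuousMap

end PiWeak


namespace PermutonAux

/-- The compact unit box as a type. -/
abbrev Box : Type := (Set.Icc (0:ℝ) 1) × (Set.Icc (0:ℝ) 1)

/-- Truncation of the plane onto the unit box. -/
noncomputable def trunc : ℝ × ℝ → Box := fun p =>
  (Set.projIcc 0 1 zero_le_one p.1, Set.projIcc 0 1 zero_le_one p.2)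

/-- Inclusion of the box into the plane. -/
def emb : Box → ℝ × ℝ := fun q => (q.1.1, q.2.1)

lemma continuous_trunc : Continuous trunc :=
  ((continuous_projIcc.comp continuous_fst).prodMk (continuous_projIcc.comp continuous_snd))

lemma continuous_emb : Continuous emb :=
  ((continuous_subtype_val.comp continuous_fst).prodMk
    (continuous_subtype_val.comp continuous_snd))

lemma marg_null (μ : Measure (ℝ × ℝ)) (hμ1 : μ.map Prod.fst = volume.restrict (Set.Icc (0:ℝ) 1))
    (hμ2 : μ.map Prod.snd = volume.restrict (Set.Icc (0:ℝ) 1)) :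
    μ {p | p.1 ∉ Set.Icc (0:ℝ) 1 ∨ p.2 ∉ Set.Icc (0:ℝ) 1} = 0 := by
  have h1 : μ (Prod.fst ⁻¹' (Set.Icc (0:ℝ) 1)ᶜ) = 0 := by
    rw [← Measure.map_apply measurable_fst measurableSet_Icc.compl, hμ1,
      Measure.restrict_apply measurableSet_Icc.compl]
    simp
  have h2 : μ (Prod.snd ⁻¹' (Set.Icc (0:ℝ) 1)ᶜ) = 0 := by
    rw [← Measure.map_apply measurable_snd measurableSet_Icc.compl, hμ2,
      Measure.restrict_apply measurableSet_Icc.compl]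
    simp
  refine measure_mono_null (fun p hp => ?_) (measure_union_null h1 h2)
  rcases hp with h | h
  · exact Or.inl h
  · exact Or.inr h

/-- Truncation followed by inclusion is the identity, `μ`-a.e., hence preserves `μ`. -/
lemma map_emb_map_trunc (μ : Measure (ℝ × ℝ)) [IsProbabilityMeasure μ]
    (hμ1 : μ.map Prod.fst = volume.restrict (Set.Icc (0:ℝ) 1))
    (hμ2 : μ.map Prod.snd = volume.restrict (Set.Icc (0:ℝ) 1)) :
    (μ.map trunc).map emb = μ := by
  rw [Measure.map_map continuous_emb.measurable continuous_trunc.measurable]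
  have hae : emb ∘ trunc =ᵐ[μ] id := by
    rw [Filter.EventuallyEq, ae_iff]
    refine measure_mono_null (fun p hp => ?_) (marg_null μ hμ1 hμ2)
    simp only [Set.mem_setOf_eq] at hp ⊢
    by_contra hcon
    push_neg at hcon
    obtain ⟨h1, h2⟩ := hcon
    apply hp
    simp only [Function.comp_apply, emb, trunc, id_eq]
    exact Prod.ext (by rw [Set.projIcc_of_mem _ h1]) (by rw [Set.projIcc_of_mem _ h2])
  rw [Measure.map_congr hae, Measure.map_id]

/-- Pushforward of a product measure under a coordinatewise map given by `emb`. -/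
lemma pi_map_emb (k : ℕ) (ν : Measure Box) (μ : Measure (ℝ × ℝ))
    [IsProbabilityMeasure ν] [IsProbabilityMeasure μ] (hv : ν.map emb = μ) :
    (Measure.pi fun _ : Fin k => ν).map (fun w i => emb (w i)) =
      Measure.pi fun _ : Fin k => μ := by
  have hF : Measurable (fun (w : Fin k → Box) i => emb (w i)) :=
    measurable_pi_lambda _ (fun i => continuous_emb.measurable.comp (measurable_pi_apply i))
  refine (Measure.pi_eq fun s hs => ?_).symm
  rw [Measure.map_apply hF (MeasurableSet.univ_pi hs)]
  have hpre : (fun (w : Fin k → Box) i => emb (w i)) ⁻¹' Set.pi Set.univ s =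
      Set.pi Set.univ (fun i => emb ⁻¹' s i) := by
    ext w
    simp [Set.mem_pi]
  rw [hpre, Measure.pi_pi]
  congr 1
  ext i
  rw [← hv, Measure.map_apply continuous_emb.measurable (hs i)]




/-- The pushforward of `γ^{⊗k}` under `z ↦ (z i, z j)` for `i ≠ j` is `γ ⊗ γ`. -/
lemma pi_map_pair {k : ℕ} (γ : Measure (ℝ × ℝ)) [IsProbabilityMeasure γ]
    {i j : Fin k} (hij : i ≠ j) :
    (Measure.pi fun _ : Fin k => γ).map (fun z => (z i, z j)) = γ.prod γ := by
  classical
  have hm : Measurable (fun z : Fin k → ℝ × ℝ => (z i, z j)) :=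
    (measurable_pi_apply i).prodMk (measurable_pi_apply j)
  refine (Measure.prod_eq fun s t hs ht => ?_).symm
  rw [Measure.map_apply hm (hs.prod ht)]
  have hpre : (fun z : Fin k → ℝ × ℝ => (z i, z j)) ⁻¹' (s ×ˢ t) =
      Set.pi Set.univ (fun l => if l = i then s else if l = j then t else Set.univ) := by
    ext z
    simp only [Set.mem_preimage, Set.mem_prod, Set.mem_pi, Set.mem_univ, true_implies]
    constructor
    · rintro ⟨h1, h2⟩ l
      by_cases hli : l = i
      · subst hli; simp [h1]
      · by_cases hlj : l = j
        · subst hlj; simp [hli, h2]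
        · simp [hli, hlj]
    · intro hl
      constructor
      · have := hl i; simpa using this
      · have := hl j; simpa [hij.symm] using this
  rw [hpre, Measure.pi_pi]
  rw [← Finset.mul_prod_erase Finset.univ _ (Finset.mem_univ i),
    ← Finset.mul_prod_erase (Finset.univ.erase i) _
      (Finset.mem_erase.mpr ⟨hij.symm, Finset.mem_univ j⟩)]
  have hrest : ∀ l ∈ (Finset.univ.erase i).erase j,
      γ (if l = i then s else if l = j then t else Set.univ) = 1 := by
    intro l hl
    simp only [Finset.mem_erase, Finset.mem_univ, and_true] at hl
    simp [hl.1, hl.2]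
  rw [Finset.prod_congr rfl hrest]
  simp [hij.symm]

/-- A "coordinate diagonal" is `γ ⊗ γ`-null when that coordinate's marginal is
Lebesgue on `[0,1]` (hence non-atomic). -/
lemma prod_diag_null (γ : Measure (ℝ × ℝ)) [IsProbabilityMeasure γ]
    (c : ℝ × ℝ → ℝ) (hc : Measurable c)
    (hmarg : γ.map c = volume.restrict (Set.Icc (0:ℝ) 1)) :
    (γ.prod γ) {q : (ℝ × ℝ) × (ℝ × ℝ) | c q.1 = c q.2} = 0 := by
  have hcont : MeasurableSet {q : (ℝ × ℝ) × (ℝ × ℝ) | c q.1 = c q.2} :=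
    measurableSet_eq_fun (hc.comp measurable_fst) (hc.comp measurable_snd)
  rw [Measure.prod_apply hcont]
  have hz : ∀ a : ℝ × ℝ, γ (Prod.mk a ⁻¹' {q : (ℝ × ℝ) × (ℝ × ℝ) | c q.1 = c q.2}) = 0 := by
    intro a
    have hset : Prod.mk a ⁻¹' {q : (ℝ × ℝ) × (ℝ × ℝ) | c q.1 = c q.2} = c ⁻¹' {c a} := by
      ext b
      simp [eq_comm]
    rw [hset, ← Measure.map_apply hc (measurableSet_singleton _), hmarg,
      Measure.restrict_apply (measurableSet_singleton _)]
    exact measure_mono_null Set.inter_subset_left Real.volume_singleton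
  simp only [hz]
  simp






lemma isOpen_imp' {α : Type*} [TopologicalSpace α] (c : Prop) {A : Set α} (hA : IsOpen A) :
    IsOpen {z | c → z ∈ A} := by
  by_cases hc : c
  · simpa [hc] using hA
  · simp [hc]

lemma isClosed_imp' {α : Type*} [TopologicalSpace α] (c : Prop) {A : Set α} (hA : IsClosed A) :
    IsClosed {z | c → z ∈ A} := by
  by_cases hc : c
  · simpa [hc] using hA
  · simp [hc]

lemma measurableSet_imp' {α : Type*} [MeasurableSpace α] (c : Prop) {A : Set α}
    (hA : MeasurableSet A) : MeasurableSet {z | c → z ∈ A} := by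
  by_cases hc : c
  · simpa [hc] using hA
  · simp [hc]

variable (k : ℕ) (τ : Equiv.Perm (Fin k))

/-- The pattern event. -/
def Ep : Set (Fin k → ℝ × ℝ) :=
  {z | (∀ i j : Fin k, i < j → (z i).1 < (z j).1) ∧
       (∀ i j : Fin k, i < j → ((z i).2 < (z j).2 ↔ τ i < τ j))}

/-- Open "strict" version. -/
def Up : Set (Fin k → ℝ × ℝ) :=
  ⋂ i, ⋂ j, {z | i < j → z ∈
    ({z : Fin k → ℝ × ℝ | (z i).1 < (z j).1} ∩
      ({z : Fin k → ℝ × ℝ | τ i < τ j → z ∈ {w : Fin k → ℝ × ℝ | (w i).2 < (w j).2}} ∩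
       {z : Fin k → ℝ × ℝ | τ j < τ i → z ∈ {w : Fin k → ℝ × ℝ | (w j).2 < (w i).2}}))}

/-- Closed "weak" version. -/
def Cp : Set (Fin k → ℝ × ℝ) :=
  ⋂ i, ⋂ j, {z | i < j → z ∈
    ({z : Fin k → ℝ × ℝ | (z i).1 ≤ (z j).1} ∩
      ({z : Fin k → ℝ × ℝ | τ i < τ j → z ∈ {w : Fin k → ℝ × ℝ | (w i).2 ≤ (w j).2}} ∩
       {z : Fin k → ℝ × ℝ | τ j < τ i → z ∈ {w : Fin k → ℝ × ℝ | (w j).2 ≤ (w i).2}}))}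

/-- Union of coordinate diagonals. -/
def Np : Set (Fin k → ℝ × ℝ) :=
  ⋃ i, ⋃ j, {z | i ≠ j ∧ ((z i).1 = (z j).1 ∨ (z i).2 = (z j).2)}

lemma contx (i : Fin k) : Continuous fun z : Fin k → ℝ × ℝ => (z i).1 :=
  continuous_fst.comp (continuous_apply i)

lemma conty (i : Fin k) : Continuous fun z : Fin k → ℝ × ℝ => (z i).2 :=
  continuous_snd.comp (continuous_apply i)

lemma isOpen_Up : IsOpen (Up k τ) :=
  isOpen_iInter_of_finite fun i => isOpen_iInter_of_finite fun j =>
    isOpen_imp' _ ((isOpen_lt (contx k i) (contx k j)).inter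
      ((isOpen_imp' _ (isOpen_lt (conty k i) (conty k j))).inter
        (isOpen_imp' _ (isOpen_lt (conty k j) (conty k i)))))

lemma isClosed_Cp : IsClosed (Cp k τ) :=
  isClosed_iInter fun i => isClosed_iInter fun j =>
    isClosed_imp' _ ((isClosed_le (contx k i) (contx k j)).inter
      ((isClosed_imp' _ (isClosed_le (conty k i) (conty k j))).inter
        (isClosed_imp' _ (isClosed_le (conty k j) (conty k i)))))

lemma mem_Up {z : Fin k → ℝ × ℝ} : z ∈ Up k τ ↔ ∀ i j : Fin k, i < j →
    ((z i).1 < (z j).1 ∧ (τ i < τ j → (z i).2 < (z j).2) ∧ (τ j < τ i → (z j).2 < (z i).2)) := by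
  simp [Up, Set.mem_iInter, Set.mem_setOf_eq, Set.mem_inter_iff]

lemma mem_Cp {z : Fin k → ℝ × ℝ} : z ∈ Cp k τ ↔ ∀ i j : Fin k, i < j →
    ((z i).1 ≤ (z j).1 ∧ (τ i < τ j → (z i).2 ≤ (z j).2) ∧ (τ j < τ i → (z j).2 ≤ (z i).2)) := by
  simp [Cp, Set.mem_iInter, Set.mem_setOf_eq, Set.mem_inter_iff]

lemma tau_lt_or_gt {i j : Fin k} (hij : i < j) : τ i < τ j ∨ τ j < τ i :=
  lt_or_gt_of_ne (fun h => (ne_of_lt hij) (τ.injective h))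

lemma Up_subset_Ep : Up k τ ⊆ Ep k τ := by
  intro z hz
  rw [mem_Up] at hz
  constructor
  · exact fun i j hij => (hz i j hij).1
  · intro i j hij
    rcases tau_lt_or_gt k τ hij with h | h
    · exact ⟨fun _ => h, fun _ => (hz i j hij).2.1 h⟩
    · exact ⟨fun hlt => absurd hlt (asymm ((hz i j hij).2.2 h)),
        fun hlt => absurd h (asymm hlt)⟩
  -- note: second component needs care
lemma Ep_subset_Cp : Ep k τ ⊆ Cp k τ := by
  intro z hz
  rw [mem_Cp]
  intro i j hij
  refine ⟨le_of_lt (hz.1 i j hij), fun h => le_of_lt ((hz.2 i j hij).mpr h), fun h => ?_⟩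
  have : ¬ (z i).2 < (z j).2 := fun hlt => absurd ((hz.2 i j hij).mp hlt) (asymm h)
  exact le_of_not_gt this

lemma Cp_diff_Up_subset_Np : Cp k τ \ Up k τ ⊆ Np k := by
  intro z hz
  obtain ⟨hC, hU⟩ := hz
  rw [mem_Cp] at hC
  rw [mem_Up] at hU
  obtain ⟨i, j, hij, hbad⟩ : ∃ i j : Fin k, i < j ∧ ¬((z i).1 < (z j).1 ∧
      (τ i < τ j → (z i).2 < (z j).2) ∧ (τ j < τ i → (z j).2 < (z i).2)) := by
    by_contra hcon
    push_neg at hcon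
    exact hU fun i j hij => hcon i j hij
  obtain ⟨h1, h2, h3⟩ := hC i j hij
  refine Set.mem_iUnion.mpr ⟨i, Set.mem_iUnion.mpr ⟨j, ne_of_lt hij, ?_⟩⟩
  by_cases hx : (z i).1 < (z j).1
  · right
    by_cases hy1 : τ i < τ j
    · have : ¬ (z i).2 < (z j).2 := by
        intro hlt
        exact hbad ⟨hx, fun _ => hlt, fun hgt => absurd hgt (asymm hy1)⟩
      exact le_antisymm (h2 hy1) (le_of_not_gt this)
    · have hy2 : τ j < τ i := (tau_lt_or_gt k τ hij).resolve_left hy1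
      have : ¬ (z j).2 < (z i).2 := by
        intro hlt
        exact hbad ⟨hx, fun hgt => absurd hgt hy1, fun _ => hlt⟩
      exact (le_antisymm (h3 hy2) (le_of_not_gt this)).symm
  · exact Or.inl (le_antisymm h1 (le_of_not_gt hx))

lemma measurableSet_Ep : MeasurableSet (Ep k τ) := by
  have : Ep k τ = (⋂ i, ⋂ j, {z : Fin k → ℝ × ℝ | i < j →
      z ∈ {w : Fin k → ℝ × ℝ | (w i).1 < (w j).1}}) ∩
      (⋂ i, ⋂ j, {z : Fin k → ℝ × ℝ | i < j →
      z ∈ {w : Fin k → ℝ × ℝ | (w i).2 < (w j).2 ↔ τ i < τ j}}) := by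
    ext z
    simp [Ep, Set.mem_iInter, forall_and]
  rw [this]
  have hx : ∀ i j : Fin k, MeasurableSet {w : Fin k → ℝ × ℝ | (w i).1 < (w j).1} := fun i j =>
    measurableSet_lt (contx k i).measurable (contx k j).measurable
  have hy : ∀ i j : Fin k, MeasurableSet {w : Fin k → ℝ × ℝ | (w i).2 < (w j).2 ↔ τ i < τ j} := by
    intro i j
    by_cases hc : τ i < τ j
    · have : {w : Fin k → ℝ × ℝ | (w i).2 < (w j).2 ↔ τ i < τ j} =
        {w : Fin k → ℝ × ℝ | (w i).2 < (w j).2} := by ext w; simp [hc]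
      rw [this]; exact measurableSet_lt (conty k i).measurable (conty k j).measurable
    · have : {w : Fin k → ℝ × ℝ | (w i).2 < (w j).2 ↔ τ i < τ j} =
        {w : Fin k → ℝ × ℝ | (w i).2 < (w j).2}ᶜ := by ext w; simp [hc]
      rw [this]
      exact (measurableSet_lt (conty k i).measurable (conty k j).measurable).compl
  exact ((MeasurableSet.iInter fun i => MeasurableSet.iInter fun j =>
      measurableSet_imp' _ (hx i j)).inter
    (MeasurableSet.iInter fun i => MeasurableSet.iInter fun j =>
      measurableSet_imp' _ (hy i j)))

lemma measurableSet_Np : MeasurableSet (Np k) := by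
  refine MeasurableSet.iUnion fun i => MeasurableSet.iUnion fun j => ?_
  by_cases hij : i = j
  · have : {z : Fin k → ℝ × ℝ | i ≠ j ∧ ((z i).1 = (z j).1 ∨ (z i).2 = (z j).2)} = ∅ := by
      ext z; simp [hij]
    rw [this]; exact MeasurableSet.empty
  · have : {z : Fin k → ℝ × ℝ | i ≠ j ∧ ((z i).1 = (z j).1 ∨ (z i).2 = (z j).2)} =
        {z : Fin k → ℝ × ℝ | (z i).1 = (z j).1} ∪ {z : Fin k → ℝ × ℝ | (z i).2 = (z j).2} := by
      ext z; simp [hij]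
    rw [this]
    exact (measurableSet_eq_fun (contx k i).measurable (contx k j).measurable).union
      (measurableSet_eq_fun (conty k i).measurable (conty k j).measurable)



lemma Np_null (k : ℕ) (γ : Measure (ℝ × ℝ)) [IsProbabilityMeasure γ]
    (hf : γ.map Prod.fst = volume.restrict (Set.Icc (0:ℝ) 1))
    (hs : γ.map Prod.snd = volume.restrict (Set.Icc (0:ℝ) 1)) :
    (Measure.pi fun _ : Fin k => γ) (Np k) = 0 := by
  refine measure_iUnion_null fun i => measure_iUnion_null fun j => ?_
  by_cases hij : i = j
  · have h0 : {z : Fin k → ℝ × ℝ | i ≠ j ∧ ((z i).1 = (z j).1 ∨ (z i).2 = (z j).2)} = ∅ := by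
      ext z; simp [hij]
    rw [h0]; exact measure_empty
  · have hm : Measurable (fun z : Fin k → ℝ × ℝ => (z i, z j)) :=
      (measurable_pi_apply i).prodMk (measurable_pi_apply j)
    have hsub : {z : Fin k → ℝ × ℝ | i ≠ j ∧ ((z i).1 = (z j).1 ∨ (z i).2 = (z j).2)} ⊆
        (fun z : Fin k → ℝ × ℝ => (z i, z j)) ⁻¹'
          ({q : (ℝ × ℝ) × (ℝ × ℝ) | Prod.fst q.1 = Prod.fst q.2} ∪
           {q : (ℝ × ℝ) × (ℝ × ℝ) | Prod.snd q.1 = Prod.snd q.2}) := by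
      intro z hz
      exact hz.2
    refine measure_mono_null hsub ?_
    have hqm : MeasurableSet ({q : (ℝ × ℝ) × (ℝ × ℝ) | Prod.fst q.1 = Prod.fst q.2} ∪
        {q : (ℝ × ℝ) × (ℝ × ℝ) | Prod.snd q.1 = Prod.snd q.2}) :=
      (measurableSet_eq_fun (measurable_fst.comp measurable_fst)
          (measurable_fst.comp measurable_snd)).union
        (measurableSet_eq_fun (measurable_snd.comp measurable_fst)
          (measurable_snd.comp measurable_snd))
    rw [← Measure.map_apply hm hqm, pi_map_pair γ hij]
    exact measure_union_null (prod_diag_null γ Prod.fst measurable_fst hf)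
      (prod_diag_null γ Prod.snd measurable_snd hs)

end PermutonAux

open MeasureTheory

/-- The density of the pattern `τ ∈ S_k` in a permuton `γ`: `k!` times the
`γ^{⊗k}`-probability that `k` independent samples, listed with increasing
`x`-coordinates, have `y`-coordinates in the relative order prescribed by `τ`. -/
noncomputable def patternDensity (k : ℕ) (τ : Equiv.Perm (Fin k))
    (γ : Measure (ℝ × ℝ)) : ENNReal :=
  (Nat.factorial k : ENNReal) *
    Measure.pi (fun _ : Fin k => γ)
      {z : Fin k → ℝ × ℝ |
        (∀ i j : Fin k, i < j → (z i).1 < (z j).1) ∧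
        (∀ i j : Fin k, i < j → ((z i).2 < (z j).2 ↔ τ i < τ j))}

/-- If permutons `γ_n` converge weakly to a permuton `γ`, then for every pattern
`τ ∈ S_k` the pattern densities converge: `ρ_τ(γ_n) → ρ_τ(γ)`. -/
theorem patternDensity_continuous_weak_convergence
    (γseq : ℕ → Measure (ℝ × ℝ)) (γ : Measure (ℝ × ℝ))
    [∀ n, IsProbabilityMeasure (γseq n)] [IsProbabilityMeasure γ]
    (hfseq : ∀ n, (γseq n).map Prod.fst = volume.restrict (Set.Icc (0:ℝ) 1))
    (hsseq : ∀ n, (γseq n).map Prod.snd = volume.restrict (Set.Icc (0:ℝ) 1))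
    (hf : γ.map Prod.fst = volume.restrict (Set.Icc (0:ℝ) 1))
    (hs : γ.map Prod.snd = volume.restrict (Set.Icc (0:ℝ) 1))
    (hconv : ∀ f : BoundedContinuousFunction (ℝ × ℝ) ℝ,
      Filter.Tendsto (fun n => ∫ p, f p ∂(γseq n)) Filter.atTop
        (nhds (∫ p, f p ∂γ)))
    (k : ℕ) (τ : Equiv.Perm (Fin k)) :
    Filter.Tendsto (fun n => (patternDensity k τ (γseq n)).toReal) Filter.atTop
      (nhds ((patternDensity k τ γ).toReal)) := by
  classical
  haveI hPMn : ∀ n, IsProbabilityMeasure ((γseq n).map PermutonAux.trunc) := fun n =>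
    Measure.isProbabilityMeasure_map PermutonAux.continuous_trunc.measurable.aemeasurable
  haveI : IsProbabilityMeasure (γ.map PermutonAux.trunc) :=
    Measure.isProbabilityMeasure_map PermutonAux.continuous_trunc.measurable.aemeasurable
  set E : Set (Fin k → ℝ × ℝ) := PermutonAux.Ep k τ with hE
  set F : (Fin k → PermutonAux.Box) → (Fin k → ℝ × ℝ) :=
    fun w i => PermutonAux.emb (w i) with hFdef
  have hFcont : Continuous F :=
    continuous_pi fun i => PermutonAux.continuous_emb.comp (continuous_apply i)
  have hFmeas : Measurable F := hFcont.measurable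
  set E' : Set (Fin k → PermutonAux.Box) := F ⁻¹' E with hE'
  -- weak convergence of the truncated measures on the box
  have hbox : ∀ f : BoundedContinuousFunction PermutonAux.Box ℝ,
      Filter.Tendsto (fun n => ∫ x, f x ∂((γseq n).map PermutonAux.trunc)) Filter.atTop
        (nhds (∫ x, f x ∂(γ.map PermutonAux.trunc))) := by
    intro f
    have hrw : ∀ μ : Measure (ℝ × ℝ), ∫ x, f x ∂(μ.map PermutonAux.trunc) =
        ∫ p, (f.compContinuous ⟨PermutonAux.trunc, PermutonAux.continuous_trunc⟩) p ∂μ := by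
      intro μ
      rw [integral_map PermutonAux.continuous_trunc.measurable.aemeasurable
        f.continuous.aestronglyMeasurable]
      rfl
    simp only [hrw]
    exact hconv _
  let Pn : ℕ → ProbabilityMeasure (Fin k → PermutonAux.Box) := fun n =>
    ⟨Measure.pi fun _ => (γseq n).map PermutonAux.trunc, inferInstance⟩
  let P : ProbabilityMeasure (Fin k → PermutonAux.Box) :=
    ⟨Measure.pi fun _ => γ.map PermutonAux.trunc, inferInstance⟩
  have hPtend : Filter.Tendsto Pn Filter.atTop (nhds P) := by
    rw [MeasureTheory.ProbabilityMeasure.tendsto_iff_forall_integral_tendsto]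
    intro f
    exact tendsto_integral_pi _ _ hbox k f
  -- identification of pushforwards
  have hmapF : (Measure.pi fun _ : Fin k => γ.map PermutonAux.trunc).map F =
      Measure.pi fun _ : Fin k => γ :=
    PermutonAux.pi_map_emb k _ γ (PermutonAux.map_emb_map_trunc γ hf hs)
  have hmapFn : ∀ n, (Measure.pi fun _ : Fin k => (γseq n).map PermutonAux.trunc).map F =
      Measure.pi fun _ : Fin k => γseq n := fun n =>
    PermutonAux.pi_map_emb k _ _ (PermutonAux.map_emb_map_trunc _ (hfseq n) (hsseq n))
  -- the frontier of the pattern event is null under the limit product measure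
  have hfront : (P : Measure (Fin k → PermutonAux.Box)) (frontier E') = 0 := by
    have hsub : frontier E' ⊆ F ⁻¹' PermutonAux.Np k := by
      intro w hw
      have hw' : w ∈ closure E' \ interior E' := hw
      have hclo : w ∈ F ⁻¹' PermutonAux.Cp k τ :=
        closure_minimal (Set.preimage_mono (PermutonAux.Ep_subset_Cp k τ))
          ((PermutonAux.isClosed_Cp k τ).preimage hFcont) hw'.1
      have hnint : F w ∉ PermutonAux.Up k τ := by
        intro hU
        exact hw'.2 (interior_maximal (Set.preimage_mono (PermutonAux.Up_subset_Ep k τ))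
          ((PermutonAux.isOpen_Up k τ).preimage hFcont) hU)
      exact PermutonAux.Cp_diff_Up_subset_Np k τ ⟨hclo, hnint⟩
    refine measure_mono_null hsub ?_
    show (Measure.pi fun _ : Fin k => γ.map PermutonAux.trunc) (F ⁻¹' PermutonAux.Np k) = 0
    rw [← Measure.map_apply hFmeas (PermutonAux.measurableSet_Np k), hmapF]
    exact PermutonAux.Np_null k γ hf hs
  have key := MeasureTheory.ProbabilityMeasure.tendsto_measure_of_null_frontier_of_tendsto'
    hPtend hfront
  -- rewrite both sides in terms of the original product measures
  have hid : ∀ n, (Pn n : Measure (Fin k → PermutonAux.Box)) E' =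
      (Measure.pi fun _ : Fin k => γseq n) E := by
    intro n
    show (Measure.pi fun _ : Fin k => (γseq n).map PermutonAux.trunc) (F ⁻¹' E) = _
    rw [← Measure.map_apply hFmeas (PermutonAux.measurableSet_Ep k τ), hmapFn n]
  have hid' : (P : Measure (Fin k → PermutonAux.Box)) E' =
      (Measure.pi fun _ : Fin k => γ) E := by
    show (Measure.pi fun _ : Fin k => γ.map PermutonAux.trunc) (F ⁻¹' E) = _
    rw [← Measure.map_apply hFmeas (PermutonAux.measurableSet_Ep k τ), hmapF]
  rw [hid'] at key
  simp only [hid] at key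
  -- convert to real numbers
  have hne : (Measure.pi fun _ : Fin k => γ) E ≠ ⊤ := measure_ne_top _ _
  have hto := (ENNReal.tendsto_toReal hne).comp key
  have hfinal := hto.const_mul ((Nat.factorial k : ENNReal)).toReal
  show Filter.Tendsto (fun n => ((Nat.factorial k : ENNReal) *
      (Measure.pi fun _ : Fin k => γseq n) E).toReal) Filter.atTop
    (nhds (((Nat.factorial k : ENNReal) * (Measure.pi fun _ : Fin k => γ) E).toReal))
  simp only [ENNReal.toReal_mul]
  exact hfinal
end
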